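/- Let β ∈ (1,2) be a Pisot number and α ∈ ℚ(β) ∩ (0,2-β). Then every point that is eventually periodic under T⁺_{β,α} lies in ℚ(β); hence the set of eventually periodic points of T⁺_{β,α} equals ℚ(β) ∩ J_{β,α}. -/

import Mathlib

noncomputable def Tplus (β α : ℝ) (x : ℝ) : ℝ :=
  if x < (1 - α) / β then β * x + α else β * x + α - 1

open IntermediateField Polynomial

/-- Any element of `ℚ(β)` has a natural-number "denominator" making it integral. -/
lemma exists_den {β : ℝ} (hβ : IsIntegral ℤ β) {y : ℝ}
    (hy : y ∈ Algebra.adjoin ℚ ({β} : Set ℝ)) :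
    ∃ q : ℕ, 0 < q ∧ IsIntegral ℤ ((q : ℝ) * y) := by
  have hint : ∀ n : ℤ, IsIntegral ℤ ((n : ℝ)) := fun n => by
    simpa using isIntegral_algebraMap (R := ℤ) (A := ℝ) (x := n)
  induction hy using Algebra.adjoin_induction with
  | mem z hz =>
    rcases hz with rfl
    exact ⟨1, one_pos, by simpa using hβ⟩
  | algebraMap r =>
    refine ⟨r.den, r.pos, ?_⟩
    have h1 : (r.den : ℝ) * (algebraMap ℚ ℝ r) = ((r.num : ℤ) : ℝ) := by
      rw [eq_ratCast, Rat.cast_def]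
      have : (r.den : ℝ) ≠ 0 := by exact_mod_cast r.den_nz
      field_simp
    rw [h1]; exact hint r.num
  | add u v hu hv ihu ihv =>
    obtain ⟨p, hp, hip⟩ := ihu
    obtain ⟨s, hs, his⟩ := ihv
    refine ⟨p * s, Nat.mul_pos hp hs, ?_⟩
    have h1 : ((p * s : ℕ) : ℝ) * (u + v)
        = ((s : ℤ) : ℝ) * ((p : ℝ) * u) + ((p : ℤ) : ℝ) * ((s : ℝ) * v) := by
      push_cast; ring
    rw [h1]
    exact ((hint s).mul hip).add ((hint p).mul his)
  | mul u v hu hv ihu ihv =>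
    obtain ⟨p, hp, hip⟩ := ihu
    obtain ⟨s, hs, his⟩ := ihv
    refine ⟨p * s, Nat.mul_pos hp hs, ?_⟩
    have h1 : ((p * s : ℕ) : ℝ) * (u * v) = ((p : ℝ) * u) * ((s : ℝ) * v) := by
      push_cast; ring
    rw [h1]
    exact hip.mul his

/-- The interval `J_{β,α}` is invariant under `T⁺_{β,α}`. -/
lemma Tplus_mem_Icc {β α x : ℝ} (hβ1 : 1 < β) (hβ2 : β < 2) (hα0 : 0 < α) (hα2 : α < 2 - β)
    (hx : x ∈ Set.Icc (-α / (β - 1)) ((1 - α) / (β - 1))) :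
    Tplus β α x ∈ Set.Icc (-α / (β - 1)) ((1 - α) / (β - 1)) := by
  have hb : (0 : ℝ) < β - 1 := by linarith
  have hβ0 : (0 : ℝ) < β := by linarith
  obtain ⟨hl, hr⟩ := hx
  rw [div_le_iff₀ hb] at hl
  rw [le_div_iff₀ hb] at hr
  simp only [Tplus]
  split_ifs with h
  · rw [lt_div_iff₀ hβ0] at h
    constructor
    · rw [div_le_iff₀ hb]; nlinarith
    · rw [le_div_iff₀ hb]; nlinarith
  · push_neg at h
    rw [div_le_iff₀ hβ0] at h
    constructor
    · rw [div_le_iff₀ hb]; nlinarith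
    · rw [le_div_iff₀ hb]; nlinarith

set_option maxHeartbeats 1000000 in
/-- For a Pisot number `β ∈ (1,2)` and `α ∈ ℚ(β) ∩ (0,2-β)`, the eventually
periodic points of `T⁺_{β,α}` in `J_{β,α}` are exactly `ℚ(β) ∩ J_{β,α}`. -/
theorem preper_eq_Qbeta (β : ℝ) (hβ : β ∈ Set.Ioo (1 : ℝ) 2)
    (hint : IsIntegral ℤ β)
    (hPisot : ∀ γ : ℂ, Polynomial.aeval γ (minpoly ℚ β) = 0 → γ ≠ (β : ℂ) →
      ‖γ‖ < 1)
    (α : ℝ) (hα : α ∈ Set.Ioo (0 : ℝ) (2 - β))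
    (hαQ : α ∈ Algebra.adjoin ℚ ({β} : Set ℝ)) :
    ∀ x ∈ Set.Icc (-α / (β - 1)) ((1 - α) / (β - 1)),
      ((∃ m n : ℕ, n < m ∧ (Tplus β α)^[m] x = (Tplus β α)^[n] x) ↔
        x ∈ Algebra.adjoin ℚ ({β} : Set ℝ)) := by
  obtain ⟨hβ1, hβ2⟩ := hβ
  obtain ⟨hα0, hα2⟩ := hα
  have hb : (0 : ℝ) < β - 1 := by linarith
  have hβQ : IsIntegral ℚ β := hint.tower_top
  set K : IntermediateField ℚ ℝ := IntermediateField.adjoin ℚ ({β} : Set ℝ) with hKdef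
  have hsub : K.toSubalgebra = Algebra.adjoin ℚ ({β} : Set ℝ) :=
    IntermediateField.adjoin_simple_toSubalgebra_of_isAlgebraic hβQ.isAlgebraic
  have hmemiff : ∀ y : ℝ, y ∈ Algebra.adjoin ℚ ({β} : Set ℝ) ↔ y ∈ K := by
    intro y; rw [← hsub]; rfl
  have hβK : β ∈ K := IntermediateField.mem_adjoin_simple_self ℚ β
  haveI : FiniteDimensional ℚ K := IntermediateField.adjoin.finiteDimensional hβQ
  haveI : CharZero K := charZero_of_injective_algebraMap (algebraMap ℚ K).injective
  haveI : NumberField K := ⟨⟩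
  set bK : K := IntermediateField.AdjoinSimple.gen ℚ β with hbKdef
  have hbKcoe : (bK : ℝ) = β := rfl
  intro x hx
  constructor
  · -- eventually periodic → in ℚ(β)
    rintro ⟨m, n, hnm, heq⟩
    have key : ∀ k : ℕ, ∃ c : ℝ, c ∈ K ∧ (Tplus β α)^[k] x = β ^ k * x + c := by
      intro k
      induction k with
      | zero => exact ⟨0, zero_mem K, by simp⟩
      | succ k ih =>
        obtain ⟨c, hc, hck⟩ := ih
        rw [Function.iterate_succ_apply', hck]
        simp only [Tplus]
        have hαK : α ∈ K := (hmemiff α).mp hαQ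
        split_ifs with h
        · exact ⟨β * c + α, add_mem (mul_mem hβK hc) hαK, by ring⟩
        · exact ⟨β * c + α - 1, sub_mem (add_mem (mul_mem hβK hc) hαK) (one_mem K), by ring⟩
    obtain ⟨cm, hcm, hm⟩ := key m
    obtain ⟨cn, hcn, hn⟩ := key n
    have hpow : β ^ n < β ^ m := pow_lt_pow_right₀ hβ1 hnm
    have hne : β ^ m - β ^ n ≠ 0 := by linarith
    have hxval : x = (cn - cm) / (β ^ m - β ^ n) := by
      rw [eq_div_iff hne]
      rw [hm, hn] at heq
      linarith [heq]
    rw [hmemiff, hxval]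
    exact div_mem (sub_mem hcn hcm) (sub_mem (pow_mem hβK m) (pow_mem hβK n))
  · -- in ℚ(β) → eventually periodic
    intro hxQ
    have hxK : x ∈ K := (hmemiff x).mp hxQ
    have hαK : α ∈ K := (hmemiff α).mp hαQ
    -- the orbit stays in J and in K
    have horb : ∀ k, (Tplus β α)^[k] x ∈ Set.Icc (-α / (β - 1)) ((1 - α) / (β - 1)) := by
      intro k
      induction k with
      | zero => simpa using hx
      | succ k ih =>
        rw [Function.iterate_succ_apply']
        exact Tplus_mem_Icc hβ1 hβ2 hα0 hα2 ih
    have hmemK : ∀ k, (Tplus β α)^[k] x ∈ K := by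
      intro k
      induction k with
      | zero => simpa using hxK
      | succ k ih =>
        rw [Function.iterate_succ_apply']
        simp only [Tplus]
        split_ifs with h
        · exact add_mem (mul_mem hβK ih) hαK
        · exact sub_mem (add_mem (mul_mem hβK ih) hαK) (one_mem K)
    -- orbit as elements of K
    set w : ℕ → K := fun k => ⟨(Tplus β α)^[k] x, hmemK k⟩ with hwdef
    set αK : K := ⟨α, hαK⟩ with hαKdef
    have hrec : ∀ k, w (k + 1) = bK * w k + αK ∨ w (k + 1) = bK * w k + αK - 1 := by
      intro k
      by_cases h : (Tplus β α)^[k] x < (1 - α) / β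
      · left
        apply Subtype.ext
        show (Tplus β α)^[k+1] x = ((bK * w k + αK : K) : ℝ)
        rw [Function.iterate_succ_apply']
        push_cast
        simp only [Tplus]
        rw [if_pos h]
        rfl
      · right
        apply Subtype.ext
        show (Tplus β α)^[k+1] x = ((bK * w k + αK - 1 : K) : ℝ)
        rw [Function.iterate_succ_apply']
        push_cast
        simp only [Tplus]
        rw [if_neg h]
        rfl
    -- denominators
    obtain ⟨q1, hq1, hq1i⟩ := exists_den hint hxQ
    obtain ⟨q2, hq2, hq2i⟩ := exists_den hint hαQ
    have hintcast : ∀ n : ℤ, IsIntegral ℤ ((n : ℝ)) := fun n => by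
      simpa using isIntegral_algebraMap (R := ℤ) (A := ℝ) (x := n)
    set q : ℕ := q1 * q2 with hqdef
    have hq : 0 < q := Nat.mul_pos hq1 hq2
    have hqx : IsIntegral ℤ ((q : ℝ) * x) := by
      have h1 : ((q : ℕ) : ℝ) * x = ((q2 : ℤ) : ℝ) * ((q1 : ℝ) * x) := by
        rw [hqdef]; push_cast; ring
      rw [h1]; exact (hintcast q2).mul hq1i
    have hqα : IsIntegral ℤ ((q : ℝ) * α) := by
      have h1 : ((q : ℕ) : ℝ) * α = ((q1 : ℤ) : ℝ) * ((q2 : ℝ) * α) := by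
        rw [hqdef]; push_cast; ring
      rw [h1]; exact (hintcast q1).mul hq2i
    have hint_orbit : ∀ k, IsIntegral ℤ ((q : ℝ) * (Tplus β α)^[k] x) := by
      intro k
      induction k with
      | zero => simpa using hqx
      | succ k ih =>
        rw [Function.iterate_succ_apply']
        simp only [Tplus]
        split_ifs with h
        · have h1 : (q : ℝ) * (β * (Tplus β α)^[k] x + α)
              = β * ((q : ℝ) * (Tplus β α)^[k] x) + (q : ℝ) * α := by ring
          rw [h1]; exact (hint.mul ih).add hqα
        · have h1 : (q : ℝ) * (β * (Tplus β α)^[k] x + α - 1)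
              = β * ((q : ℝ) * (Tplus β α)^[k] x) + (q : ℝ) * α - ((q : ℤ) : ℝ) := by
            push_cast; ring
          rw [h1]; exact ((hint.mul ih).add hqα).sub (hintcast q)
    -- every embedding of K into ℂ sends the generator to a root of the minimal polynomial
    have hgen_root : ∀ φ : K →+* ℂ, Polynomial.aeval (φ bK) (minpoly ℚ β) = 0 := by
      intro φ
      have h1 : Polynomial.aeval bK (minpoly ℚ β) = 0 :=
        IntermediateField.aeval_gen_minpoly ℚ β
      have h2 := Polynomial.aeval_algHom_apply φ.toRatAlgHom bK (minpoly ℚ β)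
      rw [h1, map_zero] at h2
      simpa using h2
    -- per-embedding bounds for the orbit
    have hbound : ∀ φ : K →+* ℂ, ∃ B : ℝ, ∀ k, ‖φ (w k)‖ ≤ B := by
      intro φ
      by_cases hφβ : φ bK = (β : ℂ)
      · -- φ is the real embedding
        set ψ : K →+* ℂ := Complex.ofRealHom.comp (algebraMap K ℝ) with hψdef
        have hψβ : ψ bK = (β : ℂ) := by
          rw [← hbKcoe]; rfl
        have hext : φ = ψ := by
          have hpb := IntermediateField.adjoin.powerBasis hβQ
          have h1 : φ.toRatAlgHom = ψ.toRatAlgHom := by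
            apply (IntermediateField.adjoin.powerBasis hβQ).algHom_ext
            rw [IntermediateField.adjoin.powerBasis_gen]
            show φ bK = ψ bK
            rw [hφβ, hψβ]
          have := congrArg (fun f => AlgHom.toRingHom f) h1
          simpa using this
        refine ⟨max |(-α / (β - 1))| |((1 - α) / (β - 1))|, fun k => ?_⟩
        rw [hext]
        have h1 : ψ (w k) = (((Tplus β α)^[k] x : ℝ) : ℂ) := rfl
        rw [h1, Complex.norm_real, Real.norm_eq_abs]
        obtain ⟨hl, hr⟩ := horb k
        refine abs_le.mpr ⟨?_, ?_⟩
        · have h2 := le_max_left |(-α / (β - 1))| |((1 - α) / (β - 1))|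
          have h3 := neg_abs_le (-α / (β - 1))
          linarith
        · have h2 := le_max_right |(-α / (β - 1))| |((1 - α) / (β - 1))|
          have h3 := le_abs_self ((1 - α) / (β - 1))
          linarith
      · -- φ sends β to a small conjugate
        have hlt : ‖φ bK‖ < 1 := hPisot _ (hgen_root φ) hφβ
        have hblt : ‖φ bK‖ < 1 := hlt
        have hbnn : 0 ≤ ‖φ bK‖ := norm_nonneg _
        set b : ℝ := ‖φ bK‖ with hbdef
        set a : ℝ := ‖φ αK‖ + 1 with hadef
        have ha0 : 0 ≤ a := by positivity
        set M : ℝ := max ‖φ (w 0)‖ (a / (1 - b)) with hMdef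
        refine ⟨M, fun k => ?_⟩
        induction k with
        | zero => exact le_max_left _ _
        | succ k ih =>
          have hstep : ‖φ (w (k + 1))‖ ≤ b * ‖φ (w k)‖ + a := by
            rcases hrec k with h | h <;> rw [h]
            · rw [map_add, map_mul]
              calc ‖φ bK * φ (w k) + φ αK‖ ≤ ‖φ bK * φ (w k)‖ + ‖φ αK‖ := norm_add_le _ _
                _ = b * ‖φ (w k)‖ + ‖φ αK‖ := by rw [norm_mul]
                _ ≤ b * ‖φ (w k)‖ + a := by rw [hadef]; linarith [norm_nonneg (φ αK)]
            · rw [map_sub, map_add, map_mul, map_one]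
              calc ‖φ bK * φ (w k) + φ αK - 1‖
                  ≤ ‖φ bK * φ (w k) + φ αK‖ + ‖(1 : ℂ)‖ := norm_sub_le _ _
                _ ≤ ‖φ bK * φ (w k)‖ + ‖φ αK‖ + 1 := by
                    simpa using add_le_add_right (norm_add_le (φ bK * φ (w k)) (φ αK)) 1
                _ = b * ‖φ (w k)‖ + a := by rw [norm_mul, hadef]; ring
          have haM : a ≤ (1 - b) * M := by
            have h1 : a / (1 - b) ≤ M := le_max_right _ _
            have h2 : 0 < 1 - b := by linarith
            calc a = (1 - b) * (a / (1 - b)) := by field_simp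
              _ ≤ (1 - b) * M := by nlinarith
          calc ‖φ (w (k + 1))‖ ≤ b * ‖φ (w k)‖ + a := hstep
            _ ≤ b * M + a := by nlinarith
            _ ≤ b * M + (1 - b) * M := by linarith
            _ = M := by ring
    choose Bf hBf using hbound
    haveI : Nonempty (K →+* ℂ) := inferInstance
    set B : ℝ := (q : ℝ) * (Finset.univ.sup' Finset.univ_nonempty Bf) with hBdef
    -- the scaled orbit lies in a finite set
    set z : ℕ → K := fun k => (q : K) * w k with hzdef
    have hzS : ∀ k, z k ∈ {y : K | IsIntegral ℤ y ∧ ∀ φ : K →+* ℂ, ‖φ y‖ ≤ B} := by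
      intro k
      constructor
      · have hcoe : (algebraMap K ℝ) (z k) = (q : ℝ) * (Tplus β α)^[k] x := by
          show ((z k : K) : ℝ) = _
          rw [hzdef]
          push_cast
          rfl
        have h5 := hint_orbit k
        rw [← hcoe] at h5
        exact (isIntegral_algebraMap_iff (algebraMap K ℝ).injective).mp h5
      · intro φ
        have h1 : φ (z k) = (q : ℂ) * φ (w k) := by
          rw [hzdef]; push_cast [map_mul, map_natCast]; ring
        rw [h1, norm_mul]
        have h2 : ‖((q : ℕ) : ℂ)‖ = (q : ℝ) := by
          rw [Complex.norm_natCast]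
        rw [h2, hBdef]
        have h3 : Bf φ ≤ Finset.univ.sup' Finset.univ_nonempty Bf :=
          Finset.le_sup' Bf (Finset.mem_univ φ)
        have h4 : ‖φ (w k)‖ ≤ Bf φ := hBf φ k
        have hq0 : (0 : ℝ) ≤ (q : ℝ) := Nat.cast_nonneg _
        exact mul_le_mul_of_nonneg_left (h4.trans h3) hq0
    have hfin := NumberField.Embeddings.finite_of_norm_le K ℂ B
    obtain ⟨m, -, n, -, hmn, hzeq⟩ :=
      Set.infinite_univ.exists_ne_map_eq_of_mapsTo (fun k _ => hzS k) hfin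
    have hq0K : ((q : ℕ) : K) ≠ 0 := Nat.cast_ne_zero.mpr hq.ne'
    have hweq : w m = w n := mul_left_cancel₀ hq0K hzeq
    have hTeq : (Tplus β α)^[m] x = (Tplus β α)^[n] x := congrArg Subtype.val hweq
    rcases hmn.lt_or_gt with h | h
    · exact ⟨n, m, h, hTeq.symm⟩
    · exact ⟨m, n, h, hTeq⟩
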